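/- arXiv:math/0304355 — 2 statements merged into one kernel-verified Lean document; each statement's English description precedes it below -/
import Mathlib

section
/- Every multiplicative map χ : I → {0,1} that is not identically 0 is of exactly one of the following forms: either χ(z) = 1 and χ is the constant function 1; or χ(z) = 0 and there is a unique path γ ∈ Y ∪ Z such that for all α ∈ Y, χ(α) = 1 if and only if α is an initial segment of γ (i.e. γ = αμ for some path μ, possibly of length 0). -/
namespace GraphCstar

/-- A directed graph: vertices, edges, source and range maps. -/
structure Graph where
  V : Type
  Ed : Type
  src : Ed → V
  rng : Ed → V

variable (G : Graph)

/-- Validity of a list of edges as a path starting at vertex `v`. -/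
def Valid : G.V → List G.Ed → Prop
  | _, [] => True
  | v, e :: l => G.src e = v ∧ Valid (G.rng e) l

/-- Terminal vertex of a list of edges starting at `v`. -/
def rngTo : G.V → List G.Ed → G.V
  | v, [] => v
  | _, e :: l => rngTo (G.rng e) l

theorem valid_append (l₁ l₂ : List G.Ed) (v : G.V) :
    Valid G v (l₁ ++ l₂) ↔ Valid G v l₁ ∧ Valid G (rngTo G v l₁) l₂ := by
  induction l₁ generalizing v with
  | nil => simp [Valid, rngTo]
  | cons e l ih => simp [Valid, rngTo, ih, and_assoc]

theorem rngTo_append (l₁ l₂ : List G.Ed) (v : G.V) :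
    rngTo G v (l₁ ++ l₂) = rngTo G (rngTo G v l₁) l₂ := by
  induction l₁ generalizing v with
  | nil => rfl
  | cons e l ih => simp [rngTo, ih]

theorem valid_drop {v : G.V} {l : List G.Ed} (n : ℕ) (h : Valid G v l) :
    Valid G (rngTo G v (l.take n)) (l.drop n) := by
  have h' : Valid G v (l.take n ++ l.drop n) := by
    rw [List.take_append_drop]; exact h
  exact ((valid_append G _ _ _).mp h').2

/-- A finite path in the graph `G`; vertices are the paths of length `0`. -/
structure FinPath where
  start : G.V
  edges : List G.Ed
  valid : Valid G start edges

namespace FinPath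

variable {G}

/-- The terminal vertex (range) of a finite path. -/
def rngF (α : FinPath G) : G.V := rngTo G α.start α.edges

/-- The length of a finite path. -/
def len (α : FinPath G) : ℕ := α.edges.length

/-- The finite path of length `0` at the vertex `v`. -/
def vp (v : G.V) : FinPath G := ⟨v, [], trivial⟩

/-- The finite path consisting of the single edge `e`. -/
def ep (e : G.Ed) : FinPath G := ⟨G.src e, [e], ⟨rfl, trivial⟩⟩

/-- Concatenation of finite paths. -/
def concat (α β : FinPath G) (h : β.start = α.rngF) : FinPath G :=
  ⟨α.start, α.edges ++ β.edges,
    (valid_append G _ _ _).mpr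
      ⟨α.valid, by
        show Valid G α.rngF β.edges
        rw [← h]; exact β.valid⟩⟩

theorem rngF_concat (α β : FinPath G) (h : β.start = α.rngF) :
    (α.concat β h).rngF = β.rngF := by
  show rngTo G α.start (α.edges ++ β.edges) = _
  rw [rngTo_append]
  show rngTo G α.rngF β.edges = _
  rw [← h]; rfl

end FinPath

/-- `α` is an initial segment of `β`. -/
def IsPref (α β : FinPath G) : Prop := α.start = β.start ∧ α.edges <+: β.edges

/-- The "remainder" path: if `α` is an initial segment of `β`, the path `μ` with
`β = αμ` (for other inputs the value is junk). -/
def diff (α β : FinPath G) : FinPath G :=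
  ⟨rngTo G β.start (β.edges.take α.edges.length),
    β.edges.drop α.edges.length, valid_drop G _ β.valid⟩

open Classical in
/-- Totalized concatenation of finite paths (junk value when endpoints do not match). -/
noncomputable def catP (α β : FinPath G) : FinPath G :=
  if h : β.start = α.rngF then α.concat β h else α

open Classical in
/-- The product on `T = {(α,β) ∈ Y × Y : r(α) = r(β)} ∪ {z}`, with `z` encoded as `none`. -/
noncomputable def mulT :
    Option (FinPath G × FinPath G) → Option (FinPath G × FinPath G) →
      Option (FinPath G × FinPath G)
  | none, _ => none
  | _, none => none
  | some (α₁, β₁), some (α₂, β₂) =>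
    if IsPref G β₁ α₂ then some (catP G α₁ (diff G β₁ α₂), β₂)
    else if IsPref G α₂ β₁ then some (α₁, catP G β₂ (diff G α₂ β₁))
    else none

/-- The involution on `T`. -/
def starT :
    Option (FinPath G × FinPath G) → Option (FinPath G × FinPath G)
  | none => none
  | some (α, β) => some (β, α)

/-- The subset of `Option (FinPath G × FinPath G)` corresponding to
`T = {(α,β) : r(α) = r(β)} ∪ {z}`. -/
def TsetT : Set (Option (FinPath G × FinPath G)) :=
  {t | ∀ α β : FinPath G, t = some (α, β) → α.rngF = β.rngF}

/-- An infinite path in the graph `G`. -/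
structure InfPath where
  seq : ℕ → G.Ed
  valid : ∀ i, G.src (seq (i + 1)) = G.rng (seq i)

/-- The initial vertex of an infinite path. -/
def InfPath.start {G : Graph} (z : InfPath G) : G.V := G.src (z.seq 0)

/-- Prepending an edge to an infinite path. -/
def consInf (e : G.Ed) (z : InfPath G) (h : z.start = G.rng e) : InfPath G where
  seq := fun n =>
    match n with
    | 0 => e
    | m + 1 => z.seq m
  valid := fun i =>
    match i with
    | 0 => h
    | m + 1 => z.valid m

/-- Prepending a finite edge list to an infinite path (with the starting vertex recorded). -/
def appendInfAux :
    (l : List G.Ed) → (v : G.V) → Valid G v l → (z : InfPath G) →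
      z.start = rngTo G v l → {w : InfPath G // w.start = v}
  | [], _, _, z, h => ⟨z, h⟩
  | e :: l, v, hv, z, h =>
    let w := appendInfAux l (G.rng e) hv.2 z h
    ⟨consInf G e w.1 w.2, hv.1⟩

/-- Concatenation of a finite path with an infinite path. -/
def FinPath.concatInf {G : Graph} (α : FinPath G) (z : InfPath G)
    (h : z.start = α.rngF) : InfPath G :=
  (appendInfAux G α.edges α.start α.valid z h).1

/-- The path space `Y ∪ Z` of all finite and infinite paths. -/
def PathSp := FinPath G ⊕ InfPath G

/-- The initial vertex of a (finite or infinite) path. -/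
def startOf : PathSp G → G.V
  | .inl α => α.start
  | .inr z => z.start

/-- The length of a path, in `ℕ∞`. -/
def lenOf : PathSp G → ℕ∞
  | .inl α => (α.edges.length : ℕ∞)
  | .inr _ => ⊤

/-- The `i`-th edge (0-indexed) of a path, if it exists. -/
def nthEdge : PathSp G → ℕ → Option G.Ed
  | .inl α, i => α.edges[i]?
  | .inr z, i => some (z.seq i)

/-- `x = αγ` for some (finite or infinite, possibly length `0`) path `γ`;
that is, `α` is an initial segment of `x`, i.e. `x ∈ D_α`. -/
def Ext (α : FinPath G) (x : PathSp G) : Prop :=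
  (∃ (β : FinPath G) (h : β.start = α.rngF), x = .inl (α.concat β h)) ∨
  (∃ (w : InfPath G) (h : w.start = α.rngF), x = .inr (α.concatInf w h))

/-- The basic set `D_α ⊆ Y ∪ Z`. -/
def Dset (α : FinPath G) : Set (PathSp G) := {x | Ext G α x}

/-- The topology on the path space, generated by the sets `D_α` and their complements. -/
def pathTop : TopologicalSpace (PathSp G) :=
  .generateFrom (Set.range (Dset G) ∪ Set.range fun α => (Dset G α)ᶜ)

/-- The vertex `v` emits infinitely many edges. -/
def Vinf (v : G.V) : Prop := {e | G.src e = v}.Infinite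

/-- Membership in `X = Y_∞ ∪ Z`. -/
def memX : PathSp G → Prop
  | .inl α => Vinf G α.rngF
  | .inr _ => True

/-- The set `X = Y_∞ ∪ Z`. -/
def Xset : Set (PathSp G) := {x | memX G x}

/-- Tail equivalence of paths: `x = αγ` and `y = βγ` for finite paths `α, β`
and a common (finite or infinite) path `γ`. -/
def TailEq (x y : PathSp G) : Prop :=
  (∃ (α β γ : FinPath G) (h₁ : γ.start = α.rngF) (h₂ : γ.start = β.rngF),
      x = .inl (α.concat γ h₁) ∧ y = .inl (β.concat γ h₂)) ∨
  (∃ (α β : FinPath G) (w : InfPath G) (h₁ : w.start = α.rngF)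
      (h₂ : w.start = β.rngF),
      x = .inr (α.concatInf w h₁) ∧ y = .inr (β.concatInf w h₂))

/-- A subset of the path space is invariant (a union of tail-equivalence classes). -/
def InvariantS (F : Set (PathSp G)) : Prop :=
  ∀ x ∈ F, ∀ y, TailEq G x y → y ∈ F

/-- Membership `(x, k, y) ∈ G` for the path groupoid: `x = αγ`, `y = βγ` and
`k = l(α) - l(β)`. -/
def InG (x : PathSp G) (k : ℤ) (y : PathSp G) : Prop :=
  (∃ (α β γ : FinPath G) (h₁ : γ.start = α.rngF) (h₂ : γ.start = β.rngF),
      x = .inl (α.concat γ h₁) ∧ y = .inl (β.concat γ h₂) ∧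
        k = (α.len : ℤ) - (β.len : ℤ)) ∨
  (∃ (α β : FinPath G) (w : InfPath G) (h₁ : w.start = α.rngF)
      (h₂ : w.start = β.rngF),
      x = .inr (α.concatInf w h₁) ∧ y = .inr (β.concatInf w h₂) ∧
        k = (α.len : ℤ) - (β.len : ℤ))

/-- There is a finite path from `u` to `w`. -/
def Reach (u w : G.V) : Prop := ∃ β : FinPath G, β.start = u ∧ β.rngF = w

/-- A loop based at the vertex `v`. -/
def LoopAt (v : G.V) (α : FinPath G) : Prop :=
  α.edges ≠ [] ∧ α.start = v ∧ α.rngF = v ∧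
    ∀ i e, i + 1 < α.edges.length → α.edges[i]? = some e → G.rng e ≠ v

/-- Condition (K): no vertex has exactly one loop based at it. -/
def CondK : Prop := ¬ ∃ v : G.V, ∃! α : FinPath G, LoopAt G v α

/-- A point of the path space has trivial isotropy if whenever `x = αγ = βγ`
then `l(α) = l(β)`. -/
def TrivIso (x : PathSp G) : Prop :=
  ∀ α β : FinPath G,
    ((∃ (γ : FinPath G) (h₁ : γ.start = α.rngF) (h₂ : γ.start = β.rngF),
        x = .inl (α.concat γ h₁) ∧ x = .inl (β.concat γ h₂)) ∨
     (∃ (w : InfPath G) (h₁ : w.start = α.rngF) (h₂ : w.start = β.rngF),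
        x = .inr (α.concatInf w h₁) ∧ x = .inr (β.concatInf w h₂))) →
    α.len = β.len


open Classical in
/-- The product on the semilattice `I = Y ∪ {z}` of idempotents (`z = none`):
`αβ` is the longer of `α, β` if one is an initial segment of the other,
`z` otherwise, with `z` absorbing. -/
noncomputable def mulI :
    Option (FinPath G) → Option (FinPath G) → Option (FinPath G)
  | none, _ => none
  | _, none => none
  | some α, some β =>
    if IsPref G α β then some β
    else if IsPref G β α then some α
    else none

section Helpers

variable {G : Graph}

theorem FinPath.ext' {α β : FinPath G} (h1 : α.start = β.start)
    (h2 : α.edges = β.edges) : α = β := by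
  cases α; cases β; simp_all

theorem InfPath.ext' {w w' : InfPath G} (h : ∀ i, w.seq i = w'.seq i) : w = w' := by
  cases w; cases w'
  have := funext h
  simp_all

theorem valid_take {v : G.V} {l : List G.Ed} (n : ℕ) (h : Valid G v l) :
    Valid G v (l.take n) := by
  have h' : Valid G v (l.take n ++ l.drop n) := by rw [List.take_append_drop]; exact h
  exact ((valid_append G _ _ _).mp h').1

theorem valid_getElem_zero {v : G.V} {l : List G.Ed} (h : Valid G v l)
    (hl : 0 < l.length) : G.src (l[0]) = v := by
  cases l with
  | nil => simp at hl
  | cons e l => exact h.1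

theorem valid_chain {v : G.V} {l : List G.Ed} (h : Valid G v l) :
    ∀ i, (hi : i + 1 < l.length) → G.src (l[i + 1]) = G.rng (l[i]'(by omega)) := by
  induction l generalizing v with
  | nil => intro i hi; simp at hi
  | cons e l ih =>
    intro i hi
    cases i with
    | zero =>
      simpa using valid_getElem_zero h.2 (by simp at hi; omega)
    | succ j =>
      simpa using ih h.2 j (by simp at hi; omega)

theorem appendInfAux_seq (l : List G.Ed) (v : G.V) (hv : Valid G v l) (z : InfPath G)
    (h : z.start = rngTo G v l) (i : ℕ) :
    (appendInfAux G l v hv z h).1.seq i =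
      if hi : i < l.length then l[i] else z.seq (i - l.length) := by
  induction l generalizing v i with
  | nil => simp [appendInfAux]
  | cons e l ih =>
    cases i with
    | zero => simp [appendInfAux, consInf]
    | succ j =>
      have : (appendInfAux G (e :: l) v hv z h).1.seq (j + 1)
          = (appendInfAux G l (G.rng e) hv.2 z h).1.seq j := rfl
      rw [this]
      refine (ih (G.rng e) hv.2 h j).trans ?_
      by_cases hj : j < l.length
      · rw [dif_pos hj, dif_pos (by simp; omega)]
        simp
      · rw [dif_neg hj, dif_neg (by simp; omega)]
        congr 1
        simp

theorem concatInf_seq (α : FinPath G) (z : InfPath G) (h : z.start = α.rngF) (i : ℕ) :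
    (α.concatInf z h).seq i =
      if hi : i < α.edges.length then α.edges[i] else z.seq (i - α.edges.length) :=
  appendInfAux_seq α.edges α.start α.valid z h i

theorem concatInf_start (α : FinPath G) (z : InfPath G) (h : z.start = α.rngF) :
    (α.concatInf z h).start = α.start :=
  (appendInfAux G α.edges α.start α.valid z h).2

theorem valid_ofFn (w : InfPath G) : ∀ (n k : ℕ),
    Valid G (G.src (w.seq k)) (List.ofFn fun i : Fin n => w.seq (k + i)) := by
  intro n
  induction n with
  | zero => intro k; trivial
  | succ m ih =>
    intro k
    rw [List.ofFn_succ]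
    refine ⟨by simp, ?_⟩
    have hfun : (fun i : Fin m => w.seq (k + ↑i.succ)) = fun i : Fin m => w.seq (k + 1 + ↑i) := by
      funext i; congr 1; simp [Fin.val_succ]; omega
    have hrng : G.rng (w.seq (k + ↑(0 : Fin (m + 1)))) = G.src (w.seq (k + 1)) := by
      simp [← w.valid k]
    rw [hfun, hrng]
    exact ih (k + 1)

theorem rngTo_ofFn (w : InfPath G) : ∀ (n k : ℕ),
    rngTo G (G.src (w.seq k)) (List.ofFn fun i : Fin n => w.seq (k + i)) =
      G.src (w.seq (k + n)) := by
  intro n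
  induction n with
  | zero => intro k; simp [rngTo]
  | succ m ih =>
    intro k
    rw [List.ofFn_succ]
    show rngTo G (G.rng (w.seq (k + ↑(0 : Fin (m + 1))))) _ = _
    have hfun : (fun i : Fin m => w.seq (k + ↑i.succ)) = fun i : Fin m => w.seq (k + 1 + ↑i) := by
      funext i; congr 1; simp [Fin.val_succ]; omega
    have hrng : G.rng (w.seq (k + ↑(0 : Fin (m + 1)))) = G.src (w.seq (k + 1)) := by
      simp [← w.valid k]
    rw [hfun, hrng, ih (k + 1)]
    have : k + 1 + m = k + (m + 1) := by omega
    rw [this]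

/-- The initial segment of length `n` of an infinite path, as a finite path. -/
def takeP (w : InfPath G) (n : ℕ) : FinPath G :=
  ⟨w.start, List.ofFn fun i : Fin n => w.seq i, by
    have := valid_ofFn w n 0
    simpa [InfPath.start] using this⟩

/-- The tail of an infinite path after removing the first `n` edges. -/
def dropP (w : InfPath G) (n : ℕ) : InfPath G :=
  ⟨fun i => w.seq (n + i), fun i => w.valid (n + i)⟩

theorem dropP_start (w : InfPath G) (n : ℕ) :
    (dropP w n).start = (takeP w n).rngF := by
  show G.src (w.seq (n + 0)) = rngTo G w.start (List.ofFn fun i : Fin n => w.seq i)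
  have := rngTo_ofFn w n 0
  simp only [Nat.zero_add, Nat.add_zero] at this ⊢
  exact this.symm

theorem takeP_concatInf (w : InfPath G) (n : ℕ) :
    w = (takeP w n).concatInf (dropP w n) (dropP_start w n) := by
  apply InfPath.ext'
  intro i
  rw [concatInf_seq]
  by_cases hi : i < (takeP w n).edges.length
  · rw [dif_pos hi]
    have hi' : i < n := by simpa [takeP] using hi
    show w.seq i = (List.ofFn fun j : Fin n => w.seq j)[i]'_
    exact ((List.getElem_ofFn (by simpa using hi') :
      (List.ofFn fun j : Fin n => w.seq j)[i]'(by simpa using hi') = _)).symm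
  · rw [dif_neg hi]
    have hi' : ¬ i < n := by simpa [takeP] using hi
    show w.seq i = w.seq (n + (i - (takeP w n).edges.length))
    congr 1
    simp [takeP]
    omega

theorem ext_inl_iff (α β : FinPath G) :
    Ext G α (Sum.inl β) ↔ IsPref G α β := by
  constructor
  · rintro (⟨b, hb, he⟩ | ⟨w, hw, he⟩)
    · obtain rfl : β = α.concat b hb := by injection he
      exact ⟨rfl, ⟨b.edges, rfl⟩⟩
    · exact (Sum.inl_ne_inr he).elim
  · rintro ⟨hs, hp⟩
    have htk : α.edges = β.edges.take α.edges.length := List.prefix_iff_eq_take.mp hp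
    refine Or.inl ⟨diff G α β, ?_, ?_⟩
    · show rngTo G β.start (β.edges.take α.edges.length) = α.rngF
      rw [← htk, ← hs]; rfl
    · refine congrArg Sum.inl (FinPath.ext' ?_ ?_)
      · exact hs.symm
      · show β.edges = α.edges ++ β.edges.drop α.edges.length
        conv_lhs => rw [← List.take_append_drop α.edges.length β.edges, ← htk]

theorem ext_inr_iff (α : FinPath G) (w : InfPath G) :
    Ext G α (Sum.inr w) ↔
      α.start = w.start ∧ ∀ i (hi : i < α.edges.length), w.seq i = α.edges[i] := by
  constructor
  · rintro (⟨b, hb, he⟩ | ⟨w', hw', he⟩)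
    · exact (Sum.inr_ne_inl he).elim
    · obtain rfl : w = α.concatInf w' hw' := by injection he
      refine ⟨(concatInf_start α w' hw').symm, fun i hi => ?_⟩
      rw [concatInf_seq, dif_pos hi]
  · rintro ⟨hs, hagr⟩
    obtain ⟨n, hn⟩ : ∃ n, α.edges.length = n := ⟨_, rfl⟩
    have hα : α = takeP w n := by
      refine FinPath.ext' hs ?_
      refine List.ext_getElem (by simp [takeP, hn]) fun i h1 h2 => ?_
      have := hagr i h1
      simp only [takeP, List.getElem_ofFn]
      exact this.symm
    rw [hα]
    exact Or.inr ⟨dropP w n, dropP_start w n, congrArg Sum.inr (takeP_concatInf w n)⟩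

theorem ext_self (α : FinPath G) : Ext G α (Sum.inl α) :=
  (ext_inl_iff α α).mpr ⟨rfl, List.prefix_refl _⟩

theorem ext_takeP (w : InfPath G) (n : ℕ) : Ext G (takeP w n) (Sum.inr w) := by
  refine (ext_inr_iff _ w).mpr ⟨rfl, fun i hi => ?_⟩
  simp [takeP, List.getElem_ofFn]

theorem ext_determined {x y : PathSp G} (h : ∀ α, Ext G α x ↔ Ext G α y) : x = y := by
  cases x with
  | inl a =>
    cases y with
    | inl b =>
      have h1 := (h a).mp (ext_self a)
      have h2 := (h b).mpr (ext_self b)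
      rw [ext_inl_iff] at h1 h2
      exact congrArg Sum.inl
        (FinPath.ext' h1.1 (h1.2.eq_of_length (le_antisymm h1.2.length_le h2.2.length_le)))
    | inr w =>
      exfalso
      have := (h (takeP w (a.edges.length + 1))).mpr (ext_takeP w _)
      rw [ext_inl_iff] at this
      have := this.2.length_le
      simp [takeP] at this
  | inr w =>
    cases y with
    | inl b =>
      exfalso
      have := (h (takeP w (b.edges.length + 1))).mp (ext_takeP w _)
      rw [ext_inl_iff] at this
      have := this.2.length_le
      simp [takeP] at this
    | inr w' =>
      refine congrArg Sum.inr (InfPath.ext' fun i => ?_)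
      have := (h (takeP w (i + 1))).mp (ext_takeP w _)
      rw [ext_inr_iff] at this
      have h2 := this.2 i (by simp [takeP])
      simp only [takeP, List.getElem_ofFn] at h2
      exact h2.symm

end Helpers

/-- Every multiplicative map `χ : I → {0,1}` that is not identically `0`
has exactly one of the following forms: either `χ(z) = 1` and `χ` is constantly `1`; or
`χ(z) = 0` and there is a unique path `γ ∈ Y ∪ Z` such that for all `α ∈ Y`,
`χ(α) = 1` iff `α` is an initial segment of `γ`. -/
theorem semicharacter_classification (G : Graph) [Countable G.V] [Countable G.Ed]
    (χ : Option (FinPath G) → ℕ)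
    (hval : ∀ t, χ t = 0 ∨ χ t = 1)
    (hmul : ∀ a b, χ (mulI G a b) = χ a * χ b)
    (hne : ∃ t, χ t ≠ 0) :
    Xor' (χ none = 1 ∧ ∀ t, χ t = 1)
      (χ none = 0 ∧
        ∃! γ : PathSp G, ∀ α : FinPath G, (χ (some α) = 1 ↔ Ext G α γ)) := by
  classical
  rcases hval none with h0 | h1
  · -- χ(z) = 0 : second alternative
    refine Or.inr ⟨⟨h0, ?_⟩, fun hc => by have := hc.1; omega⟩
    have hSne : ∃ α, χ (some α) = 1 := by
      obtain ⟨t, ht⟩ := hne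
      cases t with
      | none => exact absurd h0 ht
      | some α => exact ⟨α, (hval (some α)).resolve_left ht⟩
    have chain : ∀ α β, χ (some α) = 1 → χ (some β) = 1 →
        IsPref G α β ∨ IsPref G β α := by
      intro α β hα hβ
      by_contra hc
      push_neg at hc
      have h := hmul (some α) (some β)
      rw [show mulI G (some α) (some β) = none from by
        simp [mulI, hc.1, hc.2], h0, hα, hβ] at h
      omega
    have down : ∀ α β, IsPref G α β → χ (some β) = 1 → χ (some α) = 1 := by
      intro α β hp hβ
      have h := hmul (some α) (some β)
      rw [show mulI G (some α) (some β) = some β from by simp [mulI, hp], hβ] at h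
      rcases hval (some α) with h' | h'
      · rw [h'] at h; omega
      · exact h'
    have hsamelen : ∀ α β, χ (some α) = 1 → χ (some β) = 1 →
        α.edges.length = β.edges.length → α = β := by
      intro α β hα hβ hl
      rcases chain α β hα hβ with h | h
      · exact FinPath.ext' h.1 (h.2.eq_of_length hl)
      · exact (FinPath.ext' h.1 (h.2.eq_of_length hl.symm)).symm
    by_cases hbdd : ∃ N, ∀ α, χ (some α) = 1 → α.edges.length ≤ N
    · -- bounded : γ is a finite path
      obtain ⟨N, hN⟩ := hbdd
      have hLne : {n | ∃ α, χ (some α) = 1 ∧ α.edges.length = n}.Nonempty := by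
        obtain ⟨α, hα⟩ := hSne
        exact ⟨α.edges.length, α, hα, rfl⟩
      have hLbdd : BddAbove {n | ∃ α, χ (some α) = 1 ∧ α.edges.length = n} :=
        ⟨N, fun n hn => by obtain ⟨α, hα, hl⟩ := hn; exact hl ▸ hN α hα⟩
      obtain ⟨γ₀, hγ₀S, hγ₀l⟩ := Nat.sSup_mem hLne hLbdd
      have hmax : ∀ α, χ (some α) = 1 → α.edges.length ≤ γ₀.edges.length :=
        fun α hα => hγ₀l ▸ le_csSup hLbdd ⟨α, hα, rfl⟩
      have prop : ∀ α : FinPath G, χ (some α) = 1 ↔ Ext G α (Sum.inl γ₀) := by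
        intro α
        rw [ext_inl_iff]
        constructor
        · intro hα
          rcases chain α γ₀ hα hγ₀S with h | h
          · exact h
          · have hle := h.2.length_le
            have heq : α = γ₀ := hsamelen α γ₀ hα hγ₀S (le_antisymm (hmax α hα) hle)
            rw [heq]
            exact ⟨rfl, List.prefix_refl _⟩
        · intro h; exact down α γ₀ h hγ₀S
      exact ⟨Sum.inl γ₀, prop,
        fun y hy => ext_determined fun α => (hy α).symm.trans (prop α)⟩
    · -- unbounded : γ is an infinite path
      push_neg at hbdd
      have hex : ∀ n : ℕ, ∃ α, χ (some α) = 1 ∧ α.edges.length = n := by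
        intro n
        obtain ⟨β, hβ, hl⟩ := hbdd n
        refine ⟨⟨β.start, β.edges.take n, valid_take n β.valid⟩,
          down ⟨β.start, β.edges.take n, valid_take n β.valid⟩ β
            ⟨rfl, List.take_prefix _ _⟩ hβ, ?_⟩
        simp
        omega
      choose f hf1 hf2 using hex
      have hpref : ∀ m n, m ≤ n → IsPref G (f m) (f n) := by
        intro m n hmn
        rcases chain (f m) (f n) (hf1 m) (hf1 n) with h | h
        · exact h
        · have hle := h.2.length_le
          rw [hf2, hf2] at hle
          have : m = n := le_antisymm hmn hle
          rw [this]
          exact ⟨rfl, List.prefix_refl _⟩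
      have hidx : ∀ i, i < ((f (i + 1)).edges).length := fun i => by rw [hf2]; omega
      obtain ⟨E, hEdef⟩ : ∃ E : ℕ → G.Ed, ∀ i, E i = (f (i + 1)).edges[i]'(hidx i) :=
        ⟨_, fun i => rfl⟩
      have hagree : ∀ n i (hi : i < (f n).edges.length), (f n).edges[i] = E i := by
        intro n i hi
        have hin : i + 1 ≤ n := by rw [hf2] at hi; omega
        rw [hEdef i]
        exact ((hpref (i + 1) n hin).2.getElem (hidx i)).symm
      have hvalE : ∀ i, G.src (E (i + 1)) = G.rng (E i) := by
        intro i
        have h2 := hagree (i + 2) i (by rw [hf2]; omega)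
        have h3 := hagree (i + 2) (i + 1) (by rw [hf2]; omega)
        rw [← h2, ← h3]
        exact valid_chain (f (i + 2)).valid i (by rw [hf2]; omega)
      have hstart1 : ∀ n, (f n).start = (f 0).start :=
        fun n => ((hpref 0 n (Nat.zero_le n)).1).symm
      have hwstart : G.src (E 0) = (f 0).start := by
        rw [hEdef 0]
        exact (valid_getElem_zero (f 1).valid (by rw [hf2]; omega)).trans (hstart1 1)
      have prop : ∀ α : FinPath G,
          χ (some α) = 1 ↔ Ext G α (Sum.inr (⟨E, hvalE⟩ : InfPath G)) := by
        intro α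
        rw [ext_inr_iff]
        constructor
        · intro hα
          obtain ⟨n, hn⟩ : ∃ n, α.edges.length = n := ⟨_, rfl⟩
          have hαf : α = f n := hsamelen α (f n) hα (hf1 n) (by rw [hn, hf2])
          subst hαf
          refine ⟨?_, fun i hi => ?_⟩
          · exact (hstart1 n).trans hwstart.symm
          · exact (hagree n i hi).symm
        · rintro ⟨hs, hagr⟩
          have hαf : α = f α.edges.length := by
            refine FinPath.ext' ?_ ?_
            · rw [hs]
              exact hwstart.trans (hstart1 _).symm
            · refine List.ext_getElem (by rw [hf2]) fun i h1 h2 => ?_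
              rw [← hagr i h1]
              exact (hagree _ i h2).symm
          rw [hαf]
          exact hf1 _
      exact ⟨Sum.inr (⟨E, hvalE⟩ : InfPath G), prop,
        fun y hy => ext_determined fun α => (hy α).symm.trans (prop α)⟩
  · -- χ(z) = 1 : χ is constantly 1
    have hall : ∀ t, χ t = 1 := by
      intro t
      have h := hmul none t
      rw [show mulI G none t = none from by cases t <;> rfl, h1] at h
      omega
    exact Or.inl ⟨⟨h1, hall⟩, fun hc => by have := hc.1; omega⟩

end GraphCstar
end

section
/- Let ({P_v}, {S_e}) be a representation of E on a Hilbert space 𝓗, and for α = e_1⋯e_k ∈ Y set S_α = S_{e_1}⋯S_{e_k} (with S_v = P_v for a vertex v). Define Π : T → B(𝓗) by Π(z) = 0 and Π(α,β) = S_α S_β*. Then Π is a *-homomorphism: Π(st) = Π(s)Π(t) and Π(s*) = Π(s)* for all s, t ∈ T. -/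
namespace GraphCstar

variable (G : Graph)

variable (𝓗 : Type) [NormedAddCommGroup 𝓗] [InnerProductSpace ℂ 𝓗] [CompleteSpace 𝓗]

/-- A representation of the directed graph `G` on the Hilbert space `𝓗`: mutually
orthogonal projections `P v` and operators `S e` such that the projections
`S e (S e)*` are mutually orthogonal and the Cuntz-Krieger relations (i)-(iii) hold. -/
structure GraphRep where
  P : G.V → 𝓗 →L[ℂ] 𝓗
  S : G.Ed → 𝓗 →L[ℂ] 𝓗
  P_sa : ∀ v, ContinuousLinearMap.adjoint (P v) = P v
  P_idem : ∀ v, P v * P v = P v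
  P_orth : ∀ v w, v ≠ w → P v * P w = 0
  SS_orth : ∀ e f, e ≠ f →
    (S e * ContinuousLinearMap.adjoint (S e)) * (S f * ContinuousLinearMap.adjoint (S f)) = 0
  adjS_S : ∀ e, ContinuousLinearMap.adjoint (S e) * S e = P (G.rng e)
  P_sum : ∀ (v : G.V) (h : {e : G.Ed | G.src e = v}.Finite),
    P v = ∑ e ∈ h.toFinset, S e * ContinuousLinearMap.adjoint (S e)
  P_src : ∀ e, P (G.src e) * (S e * ContinuousLinearMap.adjoint (S e)) =
    S e * ContinuousLinearMap.adjoint (S e)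

variable {G 𝓗}

/-- `S_α = S_{e_1} ⋯ S_{e_k}` for a finite path `α = e_1 ⋯ e_k`, with `S_v = P_v`
for a vertex `v` (path of length `0`). -/
def SPath (ρ : GraphRep G 𝓗) (α : FinPath G) : 𝓗 →L[ℂ] 𝓗 :=
  match α.edges with
  | [] => ρ.P α.start
  | l@(_ :: _) => (l.map ρ.S).prod

/-- The map `Π : T → B(𝓗)`, `Π(z) = 0`, `Π(α,β) = S_α S_β*`. -/
noncomputable def PiT (ρ : GraphRep G 𝓗) : Option (FinPath G × FinPath G) → 𝓗 →L[ℂ] 𝓗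
  | none => 0
  | some (α, β) => SPath ρ α * ContinuousLinearMap.adjoint (SPath ρ β)

section Aux

variable (ρ : GraphRep G 𝓗)

/-- Product of the `S e` along a list of edges. -/
def Sl (l : List G.Ed) : 𝓗 →L[ℂ] 𝓗 := (l.map ρ.S).prod

/-- `P v * S_l`. -/
def SP (v : G.V) (l : List G.Ed) : 𝓗 →L[ℂ] 𝓗 := ρ.P v * Sl ρ l

lemma star_P (v : G.V) : star (ρ.P v) = ρ.P v := by
  rw [ContinuousLinearMap.star_eq_adjoint]; exact ρ.P_sa v

lemma starS_S (e : G.Ed) : star (ρ.S e) * ρ.S e = ρ.P (G.rng e) := by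
  rw [ContinuousLinearMap.star_eq_adjoint]; exact ρ.adjS_S e

lemma sorth (e f : G.Ed) (h : e ≠ f) :
    (ρ.S e * star (ρ.S e)) * (ρ.S f * star (ρ.S f)) = 0 := by
  rw [ContinuousLinearMap.star_eq_adjoint, ContinuousLinearMap.star_eq_adjoint]
  exact ρ.SS_orth e f h

lemma S_P_rng (e : G.Ed) : ρ.S e * ρ.P (G.rng e) = ρ.S e := by
  have hP := ρ.P_idem (G.rng e)
  have hS := starS_S ρ e
  have hPs := star_P ρ (G.rng e)
  have hS' : ∀ B, star (ρ.S e) * (ρ.S e * B) = ρ.P (G.rng e) * B := fun B => by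
    rw [← mul_assoc, hS]
  have hP' : ∀ B, ρ.P (G.rng e) * (ρ.P (G.rng e) * B) = ρ.P (G.rng e) * B := fun B => by
    rw [← mul_assoc, hP]
  have key : star (ρ.S e * ρ.P (G.rng e) - ρ.S e) * (ρ.S e * ρ.P (G.rng e) - ρ.S e) = 0 := by
    simp only [star_sub, star_mul, hPs, sub_mul, mul_sub, mul_assoc, hS', hS, hP', hP]
    abel
  have := (CStarRing.star_mul_self_eq_zero_iff _).mp key
  exact sub_eq_zero.mp this

lemma S_starS_S (e : G.Ed) : ρ.S e * (star (ρ.S e) * ρ.S e) = ρ.S e := by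
  rw [starS_S, S_P_rng]

lemma P_src_S (e : G.Ed) : ρ.P (G.src e) * ρ.S e = ρ.S e := by
  have hsrc : ρ.P (G.src e) * (ρ.S e * star (ρ.S e)) = ρ.S e * star (ρ.S e) := by
    rw [ContinuousLinearMap.star_eq_adjoint]; exact ρ.P_src e
  calc ρ.P (G.src e) * ρ.S e
      = ρ.P (G.src e) * (ρ.S e * (star (ρ.S e) * ρ.S e)) := by rw [S_starS_S]
    _ = (ρ.P (G.src e) * (ρ.S e * star (ρ.S e))) * ρ.S e := by simp only [mul_assoc]
    _ = (ρ.S e * star (ρ.S e)) * ρ.S e := by rw [hsrc]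
    _ = ρ.S e := by rw [mul_assoc, S_starS_S]

lemma starS_S_ne {e f : G.Ed} (h : e ≠ f) : star (ρ.S e) * ρ.S f = 0 := by
  calc star (ρ.S e) * ρ.S f
      = star (ρ.S e * (star (ρ.S e) * ρ.S e)) * (ρ.S f * (star (ρ.S f) * ρ.S f)) := by
        rw [S_starS_S, S_starS_S]
    _ = star (ρ.S e) * (((ρ.S e * star (ρ.S e)) * (ρ.S f * star (ρ.S f))) * ρ.S f) := by
        simp only [star_mul, star_star, mul_assoc]
    _ = 0 := by rw [sorth ρ e f h]; simp

lemma Sl_cons (e : G.Ed) (l : List G.Ed) : Sl ρ (e :: l) = ρ.S e * Sl ρ l := by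
  simp [Sl]

lemma SP_nil (v : G.V) : SP ρ v [] = ρ.P v := by simp [SP, Sl]

lemma SP_cons {v : G.V} {e : G.Ed} (l : List G.Ed) (h : G.src e = v) :
    SP ρ v (e :: l) = ρ.S e * SP ρ (G.rng e) l := by
  rw [SP, SP, Sl_cons, ← mul_assoc, ← h, P_src_S, ← mul_assoc, S_P_rng]

lemma P_SP (v : G.V) (l : List G.Ed) : ρ.P v * SP ρ v l = SP ρ v l := by
  rw [SP, ← mul_assoc, ρ.P_idem]

lemma star_SP_SP (l : List G.Ed) (v : G.V) (h : Valid G v l) :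
    star (SP ρ v l) * SP ρ v l = ρ.P (rngTo G v l) := by
  induction l generalizing v with
  | nil => rw [SP_nil, star_P]; exact ρ.P_idem v
  | cons e t ih =>
    obtain ⟨he, ht⟩ := h
    rw [SP_cons ρ t he, star_mul]
    calc (star (SP ρ (G.rng e) t) * star (ρ.S e)) * (ρ.S e * SP ρ (G.rng e) t)
        = star (SP ρ (G.rng e) t) * ((star (ρ.S e) * ρ.S e) * SP ρ (G.rng e) t) := by
          simp only [mul_assoc]
      _ = star (SP ρ (G.rng e) t) * SP ρ (G.rng e) t := by rw [starS_S, P_SP]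
      _ = ρ.P (rngTo G v (e :: t)) := ih (G.rng e) ht

lemma SP_append (l₁ l₂ : List G.Ed) (v : G.V) (h : Valid G v (l₁ ++ l₂)) :
    SP ρ v (l₁ ++ l₂) = SP ρ v l₁ * SP ρ (rngTo G v l₁) l₂ := by
  induction l₁ generalizing v with
  | nil => rw [List.nil_append, SP_nil]; exact (P_SP ρ v l₂).symm
  | cons e t ih =>
    obtain ⟨he, ht⟩ := h
    rw [List.cons_append] at *
    rw [SP_cons ρ _ he, SP_cons ρ _ he, ih (G.rng e) ht, mul_assoc]
    rfl

open Classical in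
/-- The key orthogonality computation for `S_β* S_α`. -/
lemma star_SP_mul_SP (l₁ : List G.Ed) (v w : G.V) (l₂ : List G.Ed)
    (h₁ : Valid G v l₁) (h₂ : Valid G w l₂) :
    star (SP ρ v l₁) * SP ρ w l₂ =
      if v = w ∧ l₁ <+: l₂ then SP ρ (rngTo G v l₁) (l₂.drop l₁.length)
      else if w = v ∧ l₂ <+: l₁ then star (SP ρ (rngTo G w l₂) (l₁.drop l₂.length))
      else 0 := by
  induction l₁ generalizing v w l₂ with
  | nil =>
    rw [SP_nil, star_P]
    by_cases hvw : v = w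
    · subst hvw
      rw [if_pos ⟨rfl, List.nil_prefix⟩]
      exact P_SP ρ v l₂
    · rw [if_neg (fun h => hvw h.1), if_neg (fun h => hvw h.1.symm), SP, ← mul_assoc,
        ρ.P_orth v w hvw, zero_mul]
  | cons e t ih =>
    obtain ⟨he, ht⟩ := h₁
    cases l₂ with
    | nil =>
      rw [if_neg (fun h => by simpa using h.2)]
      by_cases hvw : w = v
      · subst hvw
        rw [if_pos ⟨rfl, List.nil_prefix⟩, SP_nil]
        show star (SP ρ w (e :: t)) * ρ.P w = star (SP ρ w (e :: t))
        rw [← star_P, ← star_mul, P_SP]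
      · rw [if_neg (fun h => hvw h.1), SP_nil, ← star_P, ← star_mul, SP, ← mul_assoc,
          ρ.P_orth w v hvw, zero_mul, star_zero]
    | cons f t₂ =>
      obtain ⟨hf, ht₂⟩ := h₂
      rw [SP_cons ρ t he, SP_cons ρ t₂ hf, star_mul]
      by_cases hef : e = f
      · subst hef
        have hvw : v = w := he ▸ hf ▸ rfl
        subst hvw
        calc (star (SP ρ (G.rng e) t) * star (ρ.S e)) * (ρ.S e * SP ρ (G.rng e) t₂)
            = star (SP ρ (G.rng e) t) * ((star (ρ.S e) * ρ.S e) * SP ρ (G.rng e) t₂) := by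
              simp only [mul_assoc]
          _ = star (SP ρ (G.rng e) t) * SP ρ (G.rng e) t₂ := by rw [starS_S, P_SP]
          _ = _ := by
              rw [ih (G.rng e) (G.rng e) t₂ ht ht₂]
              simp only [List.cons_prefix_cons, true_and, List.length_cons, List.drop_succ_cons]
              rfl
      · have hz : star (ρ.S e) * ρ.S f = 0 := starS_S_ne ρ hef
        rw [if_neg (fun h => hef (List.cons_prefix_cons.mp h.2).1),
          if_neg (fun h => hef ((List.cons_prefix_cons.mp h.2).1).symm)]
        calc (star (SP ρ (G.rng e) t) * star (ρ.S e)) * (ρ.S f * SP ρ (G.rng f) t₂)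
            = star (SP ρ (G.rng e) t) * ((star (ρ.S e) * ρ.S f) * SP ρ (G.rng f) t₂) := by
              simp only [mul_assoc]
          _ = 0 := by rw [hz]; simp

lemma SPath_eq_SP (α : FinPath G) : SPath ρ α = SP ρ α.start α.edges := by
  obtain ⟨v, l, hv⟩ := α
  cases l with
  | nil => rw [SP_nil]; rfl
  | cons e t =>
    show Sl ρ (e :: t) = SP ρ v (e :: t)
    rw [SP_cons ρ t hv.1, SP, Sl_cons, ← mul_assoc, S_P_rng]

lemma PiT_some (α β : FinPath G) :
    PiT ρ (some (α, β)) = SP ρ α.start α.edges * star (SP ρ β.start β.edges) := by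
  rw [PiT, ← ContinuousLinearMap.star_eq_adjoint, SPath_eq_SP, SPath_eq_SP]

end Aux

/-- The map `Π : T → B(𝓗)` given by `Π(z) = 0` and
`Π(α,β) = S_α S_β*` is a `*`-homomorphism: `Π(st) = Π(s)Π(t)` and `Π(s*) = Π(s)*`
for all `s, t ∈ T`. -/
theorem PiT_star_hom (G : Graph) [Countable G.V] [Countable G.Ed]
    (𝓗 : Type) [NormedAddCommGroup 𝓗] [InnerProductSpace ℂ 𝓗] [CompleteSpace 𝓗]
    (ρ : GraphRep G 𝓗) :
    (∀ s ∈ TsetT G, ∀ t ∈ TsetT G, PiT ρ (mulT G s t) = PiT ρ s * PiT ρ t) ∧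
    (∀ s ∈ TsetT G, PiT ρ (starT G s) = ContinuousLinearMap.adjoint (PiT ρ s)) := by
  constructor
  · rintro s hs t ht
    classical
    obtain _ | ⟨α₁, β₁⟩ := s
    · simp [mulT, PiT]
    · obtain _ | ⟨α₂, β₂⟩ := t
      · simp [mulT, PiT]
      · have h₁ : α₁.rngF = β₁.rngF := hs α₁ β₁ rfl
        have h₂ : α₂.rngF = β₂.rngF := ht α₂ β₂ rfl
        have key := star_SP_mul_SP ρ β₁.edges β₁.start α₂.start α₂.edges β₁.valid α₂.valid
        simp only [mulT]
        by_cases hp : IsPref G β₁ α₂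
        · have hp' : β₁.start = α₂.start ∧ β₁.edges <+: α₂.edges := hp
          rw [if_pos hp]
          rw [if_pos hp'] at key
          have htake : α₂.edges.take β₁.edges.length = β₁.edges :=
            (List.prefix_iff_eq_take.mp hp'.2).symm
          have hd : (diff G β₁ α₂).start = α₁.rngF := by
            show rngTo G α₂.start (α₂.edges.take β₁.edges.length) = _
            rw [htake, ← hp'.1]; exact h₁.symm
          rw [catP, dif_pos hd, PiT_some, PiT_some, PiT_some]
          have e1 : (α₁.concat (diff G β₁ α₂) hd).start = α₁.start := rfl
          have e2 : (α₁.concat (diff G β₁ α₂) hd).edges =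
              α₁.edges ++ (diff G β₁ α₂).edges := rfl
          have hval : Valid G α₁.start (α₁.edges ++ (diff G β₁ α₂).edges) :=
            (α₁.concat (diff G β₁ α₂) hd).valid
          rw [e1, e2, SP_append ρ _ _ _ hval]
          have e3 : rngTo G α₁.start α₁.edges = rngTo G β₁.start β₁.edges := h₁
          have e4 : (diff G β₁ α₂).edges = α₂.edges.drop β₁.edges.length := rfl
          rw [e3, e4, ← key]
          simp only [mul_assoc]
        · rw [if_neg hp]
          have hp' : ¬(β₁.start = α₂.start ∧ β₁.edges <+: α₂.edges) := hp
          rw [if_neg hp'] at key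
          by_cases hq : IsPref G α₂ β₁
          · have hq' : α₂.start = β₁.start ∧ α₂.edges <+: β₁.edges := hq
            rw [if_pos hq]
            rw [if_pos hq'] at key
            have htake : β₁.edges.take α₂.edges.length = α₂.edges :=
              (List.prefix_iff_eq_take.mp hq'.2).symm
            have hd : (diff G α₂ β₁).start = β₂.rngF := by
              show rngTo G β₁.start (β₁.edges.take α₂.edges.length) = _
              rw [htake, ← hq'.1]; exact h₂
            rw [catP, dif_pos hd, PiT_some, PiT_some, PiT_some]
            have e1 : (β₂.concat (diff G α₂ β₁) hd).start = β₂.start := rfl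
            have e2 : (β₂.concat (diff G α₂ β₁) hd).edges =
                β₂.edges ++ (diff G α₂ β₁).edges := rfl
            have hval : Valid G β₂.start (β₂.edges ++ (diff G α₂ β₁).edges) :=
              (β₂.concat (diff G α₂ β₁) hd).valid
            rw [e1, e2, SP_append ρ _ _ _ hval]
            have e3 : rngTo G β₂.start β₂.edges = rngTo G α₂.start α₂.edges := h₂.symm
            have e4 : (diff G α₂ β₁).edges = β₁.edges.drop α₂.edges.length := rfl
            rw [e3, e4, star_mul, ← key]
            simp only [mul_assoc, star_mul, star_star]
          · have hq' : ¬(α₂.start = β₁.start ∧ α₂.edges <+: β₁.edges) := hq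
            rw [if_neg hq]
            rw [if_neg hq'] at key
            rw [PiT_some, PiT_some]
            show (0 : 𝓗 →L[ℂ] 𝓗) = _
            rw [mul_assoc, ← mul_assoc (star (SP ρ β₁.start β₁.edges)), key,
              zero_mul, mul_zero]
  · rintro s hs
    obtain _ | ⟨α, β⟩ := s
    · show (0 : 𝓗 →L[ℂ] 𝓗) = ContinuousLinearMap.adjoint 0
      rw [← ContinuousLinearMap.star_eq_adjoint, star_zero]
    · show PiT ρ (some (β, α)) = _
      rw [PiT_some, PiT_some, ← ContinuousLinearMap.star_eq_adjoint, star_mul, star_star]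

end GraphCstar
end
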